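/- Let ρ_E be a d×d complex density matrix with smallest eigenvalue λ_d and corresponding unit eigenvector θ_d. Let p₀, p₁ ≥ 0 with p₀ + p₁ = 1, η ∈ [0,1], and set γ := p₁(1−η) − p₀. Assume γ < 0 and p₁η + γ·λ_d > 0 (Region III). Then: (a) for every unit vector ψ ∈ ℂ^d, ‖p₁η·|ψ⟩⟨ψ| + γ·ρ_E‖₁ ≤ p₁η − γ + 2γλ_d; (b) equality holds for ψ = θ_d. Consequently the minimum error over all conventional signal states equals P_err = p₀ + γ(1 − λ_d), achieved by the eigenstate of ρ_E with smallest eigenvalue. -/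

import Mathlib

open Matrix BigOperators Kronecker ComplexOrder

/-- The trace norm of a Hermitian matrix: the sum of the absolute values of its eigenvalues. -/
noncomputable def traceNorm {n : Type*} [Fintype n] [DecidableEq n]
    {A : Matrix n n ℂ} (hA : A.IsHermitian) : ℝ :=
  ∑ i, |hA.eigenvalues i|

private lemma norm_sq_complex (c : ℂ) : c * star c = ((‖c‖ ^ 2 : ℝ) : ℂ) := by
  rw [show star c = (starRingEnd ℂ) c from rfl, Complex.mul_conj]
  norm_cast
  rw [Complex.normSq_eq_norm_sq]

private lemma sum_norm_sq_eq {d : ℕ} (v : EuclideanSpace ℂ (Fin d)) :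
    ∑ i, ‖v i‖ ^ 2 = ‖v‖ ^ 2 := by
  rw [PiLp.norm_sq_eq_of_L2]

private lemma herm_trace {d : ℕ} {A : Matrix (Fin d) (Fin d) ℂ} (hA : A.IsHermitian) :
    A.trace = ∑ i, (hA.eigenvalues i : ℂ) := by
  exact hA.trace_eq_sum_eigenvalues

private lemma herm_quad {d : ℕ} {A : Matrix (Fin d) (Fin d) ℂ} (hA : A.IsHermitian)
    (v : EuclideanSpace ℂ (Fin d)) :
    star (v : Fin d → ℂ) ⬝ᵥ A *ᵥ (v : Fin d → ℂ) =
      ∑ j, ((hA.eigenvalues j : ℂ) * ((‖hA.eigenvectorBasis.repr v j‖ ^ 2 : ℝ) : ℂ)) := by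
  set b := hA.eigenvectorBasis with hb
  have key : star (v : Fin d → ℂ) ⬝ᵥ A *ᵥ (v : Fin d → ℂ) =
      inner ℂ v ((Matrix.toEuclideanLin A) v) := by
    simp [EuclideanSpace.inner_eq_star_dotProduct, dotProduct_comm]
  rw [key]
  have hv : (Matrix.toEuclideanLin A) v =
      ∑ j, b.repr v j • ((Matrix.toEuclideanLin A) (b j)) := by
    conv_lhs => rw [← b.sum_repr v]
    rw [map_sum]
    simp only [_root_.map_smul]
  have heig : ∀ j, (Matrix.toEuclideanLin A) (b j) = (hA.eigenvalues j : ℂ) • b j := by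
    intro j
    have := hA.mulVec_eigenvectorBasis j
    apply (WithLp.equiv 2 _).injective
    simp only [Matrix.toEuclideanLin_apply]
    rw [this]
    simp [Complex.real_smul]
    rfl
  rw [hv]
  simp only [heig]
  rw [inner_sum]
  congr 1
  ext j
  rw [inner_smul_right, inner_smul_right, ← inner_conj_symm v (b j),
    ← OrthonormalBasis.repr_apply_apply]
  set c := b.repr v j
  have : c * (starRingEnd ℂ) c = ((‖c‖^2 : ℝ) : ℂ) := by
    rw [Complex.mul_conj]
    norm_cast
    rw [Complex.normSq_eq_norm_sq]
  rw [show c * (↑(hA.eigenvalues j) * (starRingEnd ℂ) c)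
      = (hA.eigenvalues j : ℂ) * (c * (starRingEnd ℂ) c) by ring, this]

private lemma herm_quad_re {d : ℕ} {A : Matrix (Fin d) (Fin d) ℂ} (hA : A.IsHermitian)
    (v : EuclideanSpace ℂ (Fin d)) :
    Complex.re (star (v : Fin d → ℂ) ⬝ᵥ A *ᵥ (v : Fin d → ℂ)) =
      ∑ j, hA.eigenvalues j * ‖hA.eigenvectorBasis.repr v j‖ ^ 2 := by
  rw [herm_quad hA v, Complex.re_sum]
  congr 1; ext j
  rw [← Complex.ofReal_mul, Complex.ofReal_re]

private lemma repr_sum_sq {d : ℕ} {A : Matrix (Fin d) (Fin d) ℂ} (hA : A.IsHermitian)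
    (v : EuclideanSpace ℂ (Fin d)) :
    ∑ j, ‖hA.eigenvectorBasis.repr v j‖ ^ 2 = ∑ i, ‖v i‖ ^ 2 := by
  rw [sum_norm_sq_eq (hA.eigenvectorBasis.repr v), sum_norm_sq_eq v,
    LinearIsometryEquiv.norm_map]

private lemma quad_lower {d : ℕ} {A : Matrix (Fin d) (Fin d) ℂ} (hA : A.IsHermitian)
    (t : ℝ) (ht : ∀ j, t ≤ hA.eigenvalues j) (v : EuclideanSpace ℂ (Fin d)) :
    t * ∑ i, ‖v i‖ ^ 2 ≤ Complex.re (star (v : Fin d → ℂ) ⬝ᵥ A *ᵥ (v : Fin d → ℂ)) := by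
  rw [herm_quad_re hA v, ← repr_sum_sq hA v, Finset.mul_sum]
  exact Finset.sum_le_sum fun j _ => mul_le_mul_of_nonneg_right (ht j) (sq_nonneg _)

private lemma quad_upper_strict {d : ℕ} {A : Matrix (Fin d) (Fin d) ℂ} (hA : A.IsHermitian)
    (t : ℝ) (ht : ∀ j, hA.eigenvalues j < t) (v : EuclideanSpace ℂ (Fin d))
    (hv : ∑ i, ‖v i‖ ^ 2 = 1) :
    Complex.re (star (v : Fin d → ℂ) ⬝ᵥ A *ᵥ (v : Fin d → ℂ)) < t := by
  rw [herm_quad_re hA v]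
  have hsum : ∑ j, ‖hA.eigenvectorBasis.repr v j‖ ^ 2 = 1 := by rw [repr_sum_sq hA v, hv]
  obtain ⟨j₀, -, hj₀⟩ : ∃ j ∈ Finset.univ, ‖hA.eigenvectorBasis.repr v j‖ ^ 2 ≠ 0 := by
    by_contra h
    push_neg at h
    simp only [Finset.mem_univ, forall_true_left] at h
    rw [Finset.sum_congr rfl (fun j _ => h j), Finset.sum_const_zero] at hsum
    norm_num at hsum
  calc ∑ j, hA.eigenvalues j * ‖hA.eigenvectorBasis.repr v j‖ ^ 2
      < ∑ j, t * ‖hA.eigenvectorBasis.repr v j‖ ^ 2 := by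
        apply Finset.sum_lt_sum
        · exact fun j _ => mul_le_mul_of_nonneg_right (ht j).le (sq_nonneg _)
        · exact ⟨j₀, Finset.mem_univ _, by
            have : 0 < ‖hA.eigenvectorBasis.repr v j₀‖ ^ 2 :=
              lt_of_le_of_ne (sq_nonneg _) (Ne.symm hj₀)
            exact mul_lt_mul_of_pos_right (ht j₀) this⟩
    _ = t := by rw [← Finset.mul_sum, hsum, mul_one]

private lemma vecMulVec_mulVec' {d : ℕ} (w x v : Fin d → ℂ) :
    vecMulVec w x *ᵥ v = (x ⬝ᵥ v) • w := by
  ext i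
  simp only [vecMulVec, Matrix.mulVec, dotProduct, Matrix.of_apply, Pi.smul_apply,
    smul_eq_mul, Finset.sum_mul, Finset.mul_sum]
  exact Finset.sum_congr rfl fun j _ => by ring

private lemma quad_Omega {d : ℕ} (ψ : Fin d → ℂ) (r g : ℝ) (ρE : Matrix (Fin d) (Fin d) ℂ)
    (v : Fin d → ℂ) :
    star v ⬝ᵥ ((r • vecMulVec ψ (star ψ) + g • ρE) *ᵥ v)
      = (r : ℂ) * ((‖star ψ ⬝ᵥ v‖ ^ 2 : ℝ) : ℂ) + (g : ℂ) * (star v ⬝ᵥ ρE *ᵥ v) := by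
  rw [Matrix.add_mulVec, Matrix.smul_mulVec, Matrix.smul_mulVec,
    dotProduct_add, dotProduct_smul, dotProduct_smul,
    vecMulVec_mulVec', dotProduct_smul]
  have h1 : star v ⬝ᵥ ψ = star (star ψ ⬝ᵥ v) := by
    rw [Matrix.star_dotProduct]
  rw [h1, smul_eq_mul, norm_sq_complex (star ψ ⬝ᵥ v)]
  simp [Complex.real_smul]

private lemma abs_eq_two_max {x : ℝ} : |x| = 2 * max x 0 - x := by
  rcases le_total x 0 with h | h
  · rw [abs_of_nonpos h, max_eq_right h]; ring
  · rw [abs_of_nonneg h, max_eq_left h]; ring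

theorem region_III_conventional {d : ℕ}
    (ρE : Matrix (Fin d) (Fin d) ℂ) (hE : ρE.PosSemidef) (hEtr : ρE.trace = 1)
    (lamD : ℝ) (hle : ∀ i, lamD ≤ hE.1.eigenvalues i)
    (hmem : ∃ i, hE.1.eigenvalues i = lamD)
    (θd : Fin d → ℂ) (hθunit : ∑ i, ‖θd i‖ ^ 2 = 1)
    (hθeig : ρE.mulVec θd = (lamD : ℂ) • θd)
    (p₀ p₁ η : ℝ) (hp₀ : 0 ≤ p₀) (hp₁ : 0 ≤ p₁) (hsum : p₀ + p₁ = 1)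
    (hη₀ : 0 ≤ η) (hη₁ : η ≤ 1)
    (hγ : p₁ * (1 - η) - p₀ < 0)
    (hpos : 0 < p₁ * η + (p₁ * (1 - η) - p₀) * lamD) :
    (∀ ψ : Fin d → ℂ, ∑ i, ‖ψ i‖ ^ 2 = 1 →
      ∀ hΩ : ((p₁ * η) • vecMulVec ψ (star ψ) + (p₁ * (1 - η) - p₀) • ρE).IsHermitian,
        traceNorm hΩ ≤ p₁ * η - (p₁ * (1 - η) - p₀) + 2 * (p₁ * (1 - η) - p₀) * lamD) ∧
    (∀ hΩ : ((p₁ * η) • vecMulVec θd (star θd) + (p₁ * (1 - η) - p₀) • ρE).IsHermitian,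
        traceNorm hΩ = p₁ * η - (p₁ * (1 - η) - p₀) + 2 * (p₁ * (1 - η) - p₀) * lamD ∧
        (1 - traceNorm hΩ) / 2 = p₀ + (p₁ * (1 - η) - p₀) * (1 - lamD)) := by
  classical
  set g : ℝ := p₁ * (1 - η) - p₀ with hgdef
  set a : ℝ := p₁ * η with hadef
  have hlam0 : 0 ≤ lamD := by
    obtain ⟨i, hi⟩ := hmem
    rw [← hi]; exact hE.eigenvalues_nonneg i
  have hg : g < 0 := hγ
  have ht : 0 < a + g * lamD := hpos
  have hgl : g * lamD ≤ 0 := mul_nonpos_of_nonpos_of_nonneg hg.le hlam0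
  have ha : 0 < a := by nlinarith
  -- quadratic form lower bound for ρE
  have rhoE_lb : ∀ w : Fin d → ℂ,
      lamD * ∑ i, ‖w i‖ ^ 2 ≤ Complex.re (star w ⬝ᵥ ρE *ᵥ w) :=
    fun w => quad_lower hE.1 lamD hle ((WithLp.equiv 2 _).symm w)
  have rhoE_nn : ∀ w : Fin d → ℂ, 0 ≤ Complex.re (star w ⬝ᵥ ρE *ᵥ w) := by
    intro w
    refine le_trans ?_ (rhoE_lb w)
    exact mul_nonneg hlam0 (Finset.sum_nonneg fun i _ => sq_nonneg _)
  -- trace fact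
  have traceFact : ∀ (ψ : Fin d → ℂ), ∑ i, ‖ψ i‖ ^ 2 = 1 →
      ∀ hΩ : (a • vecMulVec ψ (star ψ) + g • ρE).IsHermitian,
        ∑ i, hΩ.eigenvalues i = a + g := by
    intro ψ hψ hΩ
    have h1 := herm_trace hΩ
    have h3 : (vecMulVec ψ (star ψ)).trace = 1 := by
      rw [Matrix.trace]
      have hdiag : ∀ i, (vecMulVec ψ (star ψ)).diag i = ((‖ψ i‖ ^ 2 : ℝ) : ℂ) := by
        intro i
        show vecMulVec ψ (star ψ) i i = _
        rw [Matrix.vecMulVec_apply, Pi.star_apply]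
        exact norm_sq_complex (ψ i)
      rw [Finset.sum_congr rfl fun i _ => hdiag i, ← Complex.ofReal_sum, hψ,
        Complex.ofReal_one]
    have h2 : (a • vecMulVec ψ (star ψ) + g • ρE).trace = ((a + g : ℝ) : ℂ) := by
      rw [Matrix.trace_add, Matrix.trace_smul, Matrix.trace_smul, hEtr, h3]
      rw [Complex.real_smul, Complex.real_smul]
      push_cast
      ring
    rw [h2] at h1
    have h4 : ((a + g : ℝ) : ℂ) = ((∑ i, hΩ.eigenvalues i : ℝ) : ℂ) := by
      rw [h1, Complex.ofReal_sum]
    exact (Complex.ofReal_inj.mp h4).symm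
  -- part (a)
  have partA : ∀ ψ : Fin d → ℂ, ∑ i, ‖ψ i‖ ^ 2 = 1 →
      ∀ hΩ : (a • vecMulVec ψ (star ψ) + g • ρE).IsHermitian,
        traceNorm hΩ ≤ a - g + 2 * g * lamD := by
    intro ψ hψ hΩ
    set μ := hΩ.eigenvalues with hμ
    set b := hΩ.eigenvectorBasis with hb
    set c : Fin d → ℂ := fun i => star ψ ⬝ᵥ ⇑(b i) with hc
    have quadre : ∀ w : Fin d → ℂ,
        Complex.re (star w ⬝ᵥ (a • vecMulVec ψ (star ψ) + g • ρE) *ᵥ w)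
          = a * ‖star ψ ⬝ᵥ w‖ ^ 2 + g * Complex.re (star w ⬝ᵥ ρE *ᵥ w) := by
      intro w
      rw [quad_Omega]
      simp only [Complex.add_re, Complex.mul_re, Complex.ofReal_re, Complex.ofReal_im]
      ring
    have hbunit : ∀ i, ∑ k, ‖(⇑(b i) : Fin d → ℂ) k‖ ^ 2 = 1 := by
      intro i
      calc ∑ k, ‖(⇑(b i) : Fin d → ℂ) k‖ ^ 2 = ‖b i‖ ^ 2 := sum_norm_sq_eq (b i)
        _ = 1 := by rw [b.orthonormal.1 i, one_pow]
    have eigre : ∀ i, μ i = Complex.re (star ⇑(b i) ⬝ᵥ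
        (a • vecMulVec ψ (star ψ) + g • ρE) *ᵥ ⇑(b i)) := by
      intro i
      have := hΩ.eigenvalues_eq i
      simpa [RCLike.re_to_complex] using this
    have eig_pt : ∀ i, μ i ≤ a * ‖c i‖ ^ 2 + g * lamD := by
      intro i
      rw [eigre i, quadre]
      have h2 := rhoE_lb ⇑(b i)
      rw [hbunit i, mul_one] at h2
      nlinarith [h2]
    -- Parseval
    have parseval : ∑ i, ‖c i‖ ^ 2 = 1 := by
      have heq : ∀ i, ‖c i‖ = ‖b.repr ((WithLp.equiv 2 _).symm ψ) i‖ := by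
        intro i
        have h1 : c i = inner ℂ ((WithLp.equiv 2 _).symm ψ : EuclideanSpace ℂ (Fin d)) (b i) := by
          simp [c, EuclideanSpace.inner_eq_star_dotProduct, dotProduct_comm]
        have h2 : b.repr ((WithLp.equiv 2 _).symm ψ) i
            = inner ℂ (b i) ((WithLp.equiv 2 _).symm ψ : EuclideanSpace ℂ (Fin d)) :=
          b.repr_apply_apply _ i
        rw [h1, h2, ← inner_conj_symm]
        exact RCLike.norm_conj _
      calc ∑ i, ‖c i‖ ^ 2 = ∑ i, ‖b.repr ((WithLp.equiv 2 _).symm ψ) i‖ ^ 2 := by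
            exact Finset.sum_congr rfl fun i _ => by rw [heq i]
        _ = ∑ i, ‖((WithLp.equiv 2 _).symm ψ : EuclideanSpace ℂ (Fin d)) i‖ ^ 2 :=
            repr_sum_sq hΩ _
        _ = 1 := hψ
    -- sum of positive parts
    have hsummax : ∑ i, max (μ i) 0 ≤ a + g * lamD := by
      have hfilter : ∑ i, max (μ i) 0 = ∑ i ∈ Finset.univ.filter (fun i => 0 < μ i), μ i := by
        rw [Finset.sum_filter]
        refine Finset.sum_congr rfl fun i _ => ?_
        by_cases h : 0 < μ i
        · rw [if_pos h, max_eq_left h.le]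
        · push_neg at h
          rw [if_neg (not_lt.mpr h), max_eq_right h]
      rw [hfilter]
      set S := Finset.univ.filter (fun i => 0 < μ i) with hS
      rcases Finset.eq_empty_or_nonempty S with hemp | hne
      · rw [hemp, Finset.sum_empty]; linarith
      · have hcard : 1 ≤ (S.card : ℝ) := by
          have := Finset.card_pos.mpr hne
          exact_mod_cast this
        have step1 : ∑ i ∈ S, μ i ≤ ∑ i ∈ S, (a * ‖c i‖ ^ 2 + g * lamD) :=
          Finset.sum_le_sum fun i _ => eig_pt i
        have step2 : ∑ i ∈ S, (a * ‖c i‖ ^ 2 + g * lamD)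
            = a * (∑ i ∈ S, ‖c i‖ ^ 2) + (S.card : ℝ) * (g * lamD) := by
          rw [Finset.sum_add_distrib, ← Finset.mul_sum, Finset.sum_const, nsmul_eq_mul]
        have step3 : ∑ i ∈ S, ‖c i‖ ^ 2 ≤ 1 := by
          rw [← parseval]
          exact Finset.sum_le_sum_of_subset_of_nonneg (Finset.subset_univ S)
            (fun i _ _ => sq_nonneg _)
        have step4 : (S.card : ℝ) * (g * lamD) ≤ g * lamD := by nlinarith
        nlinarith
    have htrace := traceFact ψ hψ hΩ
    have : traceNorm hΩ = 2 * (∑ i, max (μ i) 0) - ∑ i, μ i := by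
      show ∑ i, |μ i| = _
      rw [Finset.mul_sum, ← Finset.sum_sub_distrib]
      exact Finset.sum_congr rfl fun i _ => abs_eq_two_max
    rw [this, htrace]
    linarith
  refine ⟨partA, fun hΩ => ?_⟩
  have hup := partA θd hθunit hΩ
  set μ := hΩ.eigenvalues with hμ
  have hθ1 : star θd ⬝ᵥ θd = 1 := by
    have : ∀ i, (star θd) i * θd i = ((‖θd i‖ ^ 2 : ℝ) : ℂ) := by
      intro i
      rw [Pi.star_apply, mul_comm]
      exact norm_sq_complex (θd i)
    rw [dotProduct, Finset.sum_congr rfl fun i _ => this i, ← Complex.ofReal_sum,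
      hθunit, Complex.ofReal_one]
  have hmvθ : (a • vecMulVec θd (star θd) + g • ρE) *ᵥ θd
      = ((a + g * lamD : ℝ) : ℂ) • θd := by
    rw [Matrix.add_mulVec, Matrix.smul_mulVec, Matrix.smul_mulVec,
      vecMulVec_mulVec', hθ1, hθeig]
    funext i
    simp only [Pi.add_apply, Pi.smul_apply, smul_eq_mul, Complex.real_smul, one_smul]
    push_cast
    ring
  have hex : ∃ k, a + g * lamD ≤ μ k := by
    by_contra hcon
    push_neg at hcon
    have hs : Complex.re (star θd ⬝ᵥ (a • vecMulVec θd (star θd) + g • ρE) *ᵥ θd)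
        < a + g * lamD :=
      quad_upper_strict hΩ (a + g * lamD) hcon ((WithLp.equiv 2 _).symm θd) hθunit
    have heq : Complex.re (star θd ⬝ᵥ (a • vecMulVec θd (star θd) + g • ρE) *ᵥ θd)
        = a + g * lamD := by
      rw [hmvθ, dotProduct_smul, hθ1, smul_eq_mul, mul_one, Complex.ofReal_re]
    linarith
  obtain ⟨k, hk⟩ := hex
  have htrace := traceFact θd hθunit hΩ
  have habs : traceNorm hΩ = 2 * (∑ i, max (μ i) 0) - ∑ i, μ i := by
    show ∑ i, |μ i| = _
    rw [Finset.mul_sum, ← Finset.sum_sub_distrib]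
    exact Finset.sum_congr rfl fun i _ => abs_eq_two_max
  have hlow : a - g + 2 * g * lamD ≤ traceNorm hΩ := by
    have h2 : max (μ k) 0 ≤ ∑ i, max (μ i) 0 :=
      Finset.single_le_sum (fun i _ => le_max_right (μ i) 0) (Finset.mem_univ k)
    have h3 : a + g * lamD ≤ max (μ k) 0 := le_trans hk (le_max_left _ _)
    rw [habs, htrace]
    linarith
  have heq : traceNorm hΩ = a - g + 2 * g * lamD := le_antisymm hup hlow
  refine ⟨heq, ?_⟩
  rw [heq, hadef, hgdef]
  linear_combination (-(1 : ℝ) / 2) * hsum
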